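/- Let n ≥ 10 be even with n ≡ 2 (mod 8), and let V = (Fin n → ZMod 2) with the minus-type quadratic form Q(x) = Σ_{i=1}^{n/2−1} x_{2i−1} x_{2i} + x_{n−1}² + x_{n−1} x_n + x_n² and its polar bilinear form B(x,y) = Q(x+y) + Q(x) + Q(y). Then: (a) there exists an injective group homomorphism ψ from the symmetric group S_{n+2} to the group of linear automorphisms of V such that for every transposition τ ∈ S_{n+2}, ψ(τ) is an orthogonal transvection t_v for some v ∈ V with Q(v) = 1; and (b) there is no injective group homomorphism from S_{n+3} to the linear automorphisms of V sending every transposition to such a transvection. (Equivalently, φ(O_n^{−}(2)) = n+2 when n ≡ 2 (mod 8).) -/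

import Mathlib

/-- The minus-type quadratic form on `(ZMod 2)^n` (`n` even, `n ≥ 2`):
`Q x = ∑_{i < n/2 - 1} x (2i) * x (2i+1) + x (n-2)² + x (n-2) * x (n-1) + x (n-1)²`
(0-indexed). -/
def Qform (n : ℕ) (hn : 2 ≤ n) (x : Fin n → ZMod 2) : ZMod 2 :=
  (∑ i : Fin (n / 2 - 1),
    x ⟨2 * i.1, by have := i.2; omega⟩ * x ⟨2 * i.1 + 1, by have := i.2; omega⟩) +
    x ⟨n - 2, by omega⟩ ^ 2 + x ⟨n - 2, by omega⟩ * x ⟨n - 1, by omega⟩ +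
    x ⟨n - 1, by omega⟩ ^ 2

/-- The polar bilinear form `B x y = Q (x + y) + Q x + Q y` of a quadratic form `Q`. -/
def polarForm {n : ℕ} (Q : (Fin n → ZMod 2) → ZMod 2) (x y : Fin n → ZMod 2) : ZMod 2 :=
  Q (x + y) + Q x + Q y

open Finset
namespace PhiAux

lemma z2 (a : ZMod 2) : a = 0 ∨ a = 1 := by revert a; decide

lemma zsq (a : ZMod 2) : a ^ 2 = a := by revert a; decide

def cf (n : ℕ) (x : Fin n → ZMod 2) (k : ℕ) : ZMod 2 := if h : k < n then x ⟨k, h⟩ else 0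

lemma cf_add (n : ℕ) (x y : Fin n → ZMod 2) (k : ℕ) :
    cf n (x + y) k = cf n x k + cf n y k := by
  unfold cf; split_ifs <;> simp

lemma cf_smul (n : ℕ) (c : ZMod 2) (x : Fin n → ZMod 2) (k : ℕ) :
    cf n (c • x) k = c * cf n x k := by
  unfold cf; split_ifs <;> simp

lemma cf_zero (n k : ℕ) : cf n (0 : Fin n → ZMod 2) k = 0 := by
  unfold cf; split_ifs <;> simp

def Bfun (n : ℕ) (x y : Fin n → ZMod 2) : ZMod 2 :=
  ∑ i ∈ range (n/2), (cf n x (2*i) * cf n y (2*i+1) + cf n x (2*i+1) * cf n y (2*i))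

lemma Qform_eq (n : ℕ) (hn : 2 ≤ n) (he : n % 2 = 0) (x : Fin n → ZMod 2) :
    Qform n hn x = (∑ i ∈ range (n/2), cf n x (2*i) * cf n x (2*i+1))
      + cf n x (n-2) + cf n x (n-1) := by
  have h1 : n / 2 - 1 + 1 = n / 2 := by omega
  have h2 : 2 * (n/2 - 1) = n - 2 := by omega
  have hs : (∑ i : Fin (n/2 - 1),
      x ⟨2 * i.1, by have := i.2; omega⟩ * x ⟨2 * i.1 + 1, by have := i.2; omega⟩)
      = ∑ i ∈ range (n/2 - 1), cf n x (2*i) * cf n x (2*i+1) := by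
    rw [← Fin.sum_univ_eq_sum_range (fun i => cf n x (2*i) * cf n x (2*i+1)) (n/2-1)]
    apply Finset.sum_congr rfl
    intro i _
    have ha : 2 * (i:ℕ) < n := by have := i.2; omega
    have hb : 2 * (i:ℕ) + 1 < n := by have := i.2; omega
    rw [cf, cf, dif_pos ha, dif_pos hb]
  have hrange : (∑ i ∈ range (n/2), cf n x (2*i) * cf n x (2*i+1))
      = (∑ i ∈ range (n/2 - 1), cf n x (2*i) * cf n x (2*i+1))
        + cf n x (n-2) * cf n x (n-1) := by
    have h3 : 2*(n/2-1)+1 = n-1 := by omega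
    rw [← h1, Finset.sum_range_succ, h3, h2]
    simp
  have hc2 : x ⟨n-2, by omega⟩ = cf n x (n-2) := by rw [cf, dif_pos (by omega)]
  have hc1 : x ⟨n-1, by omega⟩ = cf n x (n-1) := by rw [cf, dif_pos (by omega)]
  unfold Qform
  rw [hs, hrange, hc1, hc2, zsq, zsq]
  ring

lemma polar_eq (n : ℕ) (hn : 2 ≤ n) (he : n % 2 = 0) (x y : Fin n → ZMod 2) :
    polarForm (Qform n hn) x y = Bfun n x y := by
  have key : ∀ a b a' b' : ZMod 2, (a+a')*(b+b') + a*b + a'*b' = a*b' + b*a' := by decide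
  have h2 : (2 : ZMod 2) = 0 := by decide
  unfold polarForm
  rw [Qform_eq n hn he, Qform_eq n hn he, Qform_eq n hn he]
  simp only [cf_add]
  have hS : (∑ i ∈ range (n/2), (cf n x (2*i) + cf n y (2*i)) * (cf n x (2*i+1) + cf n y (2*i+1)))
      + (∑ i ∈ range (n/2), cf n x (2*i) * cf n x (2*i+1))
      + (∑ i ∈ range (n/2), cf n y (2*i) * cf n y (2*i+1)) = Bfun n x y := by
    rw [← Finset.sum_add_distrib, ← Finset.sum_add_distrib]
    apply Finset.sum_congr rfl
    intro i _
    exact key _ _ _ _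
  linear_combination hS + (cf n x (n-2) + cf n y (n-2) + cf n x (n-1) + cf n y (n-1)) * h2

lemma Bfun_symm (n : ℕ) (x y : Fin n → ZMod 2) : Bfun n x y = Bfun n y x := by
  unfold Bfun; apply Finset.sum_congr rfl; intro i _; ring

lemma Bfun_self (n : ℕ) (x : Fin n → ZMod 2) : Bfun n x x = 0 := by
  unfold Bfun
  apply Finset.sum_eq_zero
  intro i _
  have : ∀ a b : ZMod 2, a * b + b * a = 0 := by decide
  exact this _ _

lemma Bfun_add_right (n : ℕ) (x y z : Fin n → ZMod 2) :
    Bfun n x (y + z) = Bfun n x y + Bfun n x z := by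
  unfold Bfun
  rw [← Finset.sum_add_distrib]
  apply Finset.sum_congr rfl
  intro i _
  simp only [cf_add]
  ring

lemma Bfun_smul_right (n : ℕ) (c : ZMod 2) (x y : Fin n → ZMod 2) :
    Bfun n x (c • y) = c * Bfun n x y := by
  unfold Bfun
  rw [Finset.mul_sum]
  apply Finset.sum_congr rfl
  intro i _
  simp only [cf_smul]
  ring

lemma Bfun_zero_right (n : ℕ) (x : Fin n → ZMod 2) : Bfun n x 0 = 0 := by
  unfold Bfun
  apply Finset.sum_eq_zero
  intro i _
  simp [cf_zero]

lemma Bfun_add_left (n : ℕ) (x y z : Fin n → ZMod 2) :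
    Bfun n (x + y) z = Bfun n x z + Bfun n y z := by
  rw [Bfun_symm, Bfun_add_right, Bfun_symm n z x, Bfun_symm n z y]

lemma Bfun_smul_left (n : ℕ) (c : ZMod 2) (x y : Fin n → ZMod 2) :
    Bfun n (c • x) y = c * Bfun n x y := by
  rw [Bfun_symm, Bfun_smul_right, Bfun_symm n y x]

lemma Bfun_sum_right {ι : Type*} (n : ℕ) (x : Fin n → ZMod 2) (s : Finset ι)
    (f : ι → (Fin n → ZMod 2)) :
    Bfun n x (∑ a ∈ s, f a) = ∑ a ∈ s, Bfun n x (f a) := by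
  classical
  induction s using Finset.induction_on with
  | empty => simp [Bfun_zero_right]
  | insert _ _ h ih => rw [Finset.sum_insert h, Finset.sum_insert h, Bfun_add_right, ih]

lemma Qadd (n : ℕ) (hn : 2 ≤ n) (he : n % 2 = 0) (x y : Fin n → ZMod 2) :
    Qform n hn (x + y) = Qform n hn x + Qform n hn y + Bfun n x y := by
  have h := polar_eq n hn he x y
  unfold polarForm at h
  have rearr : ∀ a b c d : ZMod 2, a + b + c = d → a = b + c + d := by decide
  exact rearr _ _ _ _ h

lemma Q_zero (n : ℕ) (hn : 2 ≤ n) : Qform n hn (0 : Fin n → ZMod 2) = 0 := by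
  unfold Qform
  simp


lemma zadd (a : ZMod 2) : a + a = 0 := by revert a; decide

lemma natcast2 (a b : ℕ) (h : a % 2 = b % 2) : (a : ZMod 2) = (b : ZMod 2) := by
  rw [ZMod.natCast_eq_natCast_iff]
  exact h

lemma ztwo : (2 : ZMod 2) = 0 := by decide

def mu (m j : ℕ) : ZMod 2 := (j : ZMod 2) + 1 + (if j = m - 1 then 1 else 0)

def lam (m j i : ℕ) : ZMod 2 := (if j < i then 1 else 0) + mu m j + mu m i

lemma lam_self (m j : ℕ) : lam m j j = 0 := by
  unfold lam
  simp [zadd]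

lemma lam_anti (m p q : ℕ) (h : p ≠ q) : lam m p q + lam m q p = 1 := by
  unfold lam
  rcases lt_or_gt_of_ne h with h' | h'
  · rw [if_pos h', if_neg (by omega)]
    linear_combination (mu m p + mu m q) * ztwo
  · rw [if_neg (by omega), if_pos h']
    linear_combination (mu m p + mu m q) * ztwo

lemma sum_mu (m : ℕ) (hm : m % 4 = 1) : ∑ i ∈ range m, mu m i = 0 := by
  unfold mu
  rw [Finset.sum_add_distrib, Finset.sum_add_distrib]
  have h1 : ∑ i ∈ range m, ((i : ℕ) : ZMod 2) = 0 := by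
    rw [← Nat.cast_sum]
    obtain ⟨t, ht⟩ : ∃ t, m - 1 = 4 * t := ⟨(m-1)/4, by omega⟩
    have h2 : (∑ i ∈ range m, i) * 2 = (2 * (t * m)) * 2 := by
      rw [Finset.sum_range_id_mul_two, ht]; ring
    have h3 : (∑ i ∈ range m, i) = 2 * (t * m) := Nat.eq_of_mul_eq_mul_right two_pos h2
    rw [h3]
    exact natcast2 _ 0 (by rw [Nat.mul_mod_right])
  have h2 : ∑ i ∈ range m, (1 : ZMod 2) = 1 := by
    rw [Finset.sum_const, Finset.card_range, nsmul_eq_mul, mul_one]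
    exact natcast2 m 1 (by omega)
  have h3 : ∑ i ∈ range m, (if i = m - 1 then (1:ZMod 2) else 0) = 1 := by
    rw [Finset.sum_ite_eq' (range m) (m-1) (fun _ => (1:ZMod 2))]
    rw [if_pos (Finset.mem_range.mpr (by omega))]
  rw [h1, h2, h3]
  decide

lemma sum_lam (m j : ℕ) (hm : m % 4 = 1) (hj : j < m) :
    ∑ i ∈ range m, lam m j i = 1 + (if j = m - 1 then 1 else 0) := by
  unfold lam
  rw [Finset.sum_add_distrib, Finset.sum_add_distrib]
  have h1 : ∑ i ∈ range m, (if j < i then (1:ZMod 2) else 0) = ((j:ℕ) : ZMod 2) := by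
    rw [Finset.sum_boole]
    have hf : (range m).filter (fun i => j < i) = Finset.Ico (j+1) m := by
      ext i
      simp [Finset.mem_filter, Finset.mem_range, Finset.mem_Ico]
      omega
    rw [hf, Nat.card_Ico]
    exact natcast2 _ _ (by omega)
  have h2 : ∑ _i ∈ range m, mu m j = mu m j := by
    rw [Finset.sum_const, Finset.card_range]
    have : (m : ZMod 2) = 1 := natcast2 m 1 (by omega)
    rw [nsmul_eq_mul, this, one_mul]
  rw [h1, h2, sum_mu m hm]
  unfold mu
  linear_combination ((j:ZMod 2)) * ztwo

lemma zmul (a : ZMod 2) : a * a = a := by revert a; decide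

def Wf (n a k : ℕ) : ZMod 2 :=
  if k / 2 = a / 2 then (if k % 2 = a % 2 then 1 else 0) else lam (n/2) (a/2) (k/2)

def Wv (n a : ℕ) : Fin n → ZMod 2 := fun k => Wf n a k.1

lemma cf_Wv (n a i r : ℕ) (hi : i < n/2) (hr : r < 2) :
    cf n (Wv n a) (2*i + r)
      = if i = a/2 then (if r = a%2 then 1 else 0) else lam (n/2) (a/2) i := by
  have hk : 2*i + r < n := by omega
  rw [cf, dif_pos hk]
  show Wf n a (2*i+r) = _
  unfold Wf
  have h1 : (2*i+r)/2 = i := by omega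
  have h2 : (2*i+r)%2 = r := by omega
  rw [h1, h2]

lemma ind_mul (s : ℕ) (hs : s < 2) (c : ZMod 2) :
    (if 0 = s then (1:ZMod 2) else 0) * c + (if 1 = s then (1:ZMod 2) else 0) * c = c := by
  interval_cases s <;> simp

lemma B_Wv (n : ℕ) (he : n % 2 = 0) (a b : ℕ) (ha : a < n) (hb : b < n) (hab : a ≠ b) :
    Bfun n (Wv n a) (Wv n b) = 1 := by
  have hja : a/2 < n/2 := by omega
  have hjb : b/2 < n/2 := by omega
  unfold Bfun
  by_cases hjj : a/2 = b/2
  · have hss : a % 2 ≠ b % 2 := by omega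
    have key : ∀ i ∈ range (n/2),
        cf n (Wv n a) (2*i) * cf n (Wv n b) (2*i+1)
          + cf n (Wv n a) (2*i+1) * cf n (Wv n b) (2*i)
        = if i = a/2 then 1 else 0 := by
      intro i hi
      rw [Finset.mem_range] at hi
      rw [show (2*i : ℕ) = 2*i+0 by ring, cf_Wv n a i 0 hi (by omega),
        cf_Wv n a i 1 hi (by omega), cf_Wv n b i 0 hi (by omega),
        cf_Wv n b i 1 hi (by omega)]
      by_cases hia : i = a/2
      · have hib : i = b/2 := by omega
        rw [if_pos hia, if_pos hia, if_pos hib, if_pos hib, if_pos hia]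
        have : a % 2 = 0 ∧ b % 2 = 1 ∨ a % 2 = 1 ∧ b % 2 = 0 := by omega
        rcases this with ⟨h1, h2⟩ | ⟨h1, h2⟩ <;> simp [h1, h2]
      · have hib : ¬ i = b/2 := by omega
        rw [if_neg hia, if_neg hia, if_neg hib, if_neg hib, if_neg hia]
        rw [← hjj]
        exact zadd _
    rw [Finset.sum_congr rfl key, Finset.sum_ite_eq' (range (n/2)) (a/2) (fun _ => (1:ZMod 2)),
      if_pos (Finset.mem_range.mpr hja)]
  · have key : ∀ i ∈ range (n/2),
        cf n (Wv n a) (2*i) * cf n (Wv n b) (2*i+1)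
          + cf n (Wv n a) (2*i+1) * cf n (Wv n b) (2*i)
        = (if i = a/2 then lam (n/2) (b/2) (a/2) else 0)
          + (if i = b/2 then lam (n/2) (a/2) (b/2) else 0) := by
      intro i hi
      rw [Finset.mem_range] at hi
      rw [show (2*i : ℕ) = 2*i+0 by ring, cf_Wv n a i 0 hi (by omega),
        cf_Wv n a i 1 hi (by omega), cf_Wv n b i 0 hi (by omega),
        cf_Wv n b i 1 hi (by omega)]
      by_cases hia : i = a/2
      · have hib : ¬ (i = b/2) := by rw [hia]; exact hjj
        rw [if_pos hia, if_pos hia, if_neg hib, if_neg hib, if_pos hia, if_neg hib, add_zero]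
        rw [← hia]
        have h2 := ind_mul (a % 2) (by omega) (lam (n/2) (b/2) i)
        calc (if 0 = a % 2 then (1:ZMod 2) else 0) * lam (n/2) (b/2) i
              + (if 1 = a % 2 then (1:ZMod 2) else 0) * lam (n/2) (b/2) i
            = lam (n/2) (b/2) i := h2
          _ = _ := by rw [hia]
      · by_cases hib : i = b/2
        · rw [if_neg hia, if_neg hia, if_pos hib, if_pos hib, if_neg hia, if_pos hib, zero_add]
          rw [← hib]
          have h2 : ∀ c : ZMod 2, c * (if 0 = b % 2 then (1:ZMod 2) else 0)
              + c * (if 1 = b % 2 then (1:ZMod 2) else 0) = c := by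
            intro c
            have : b % 2 = 0 ∨ b % 2 = 1 := by omega
            rcases this with h | h <;> simp [h, mul_comm]
          calc lam (n/2) (a/2) i * (if 1 = b % 2 then (1:ZMod 2) else 0)
              + lam (n/2) (a/2) i * (if 0 = b % 2 then (1:ZMod 2) else 0)
              = lam (n/2) (a/2) i := by rw [add_comm]; exact h2 _
            _ = _ := by rw [hib]
        · rw [if_neg hia, if_neg hia, if_neg hib, if_neg hib, if_neg hia, if_neg hib, add_zero]
          rw [mul_comm (lam (n/2) (a/2) i) (lam (n/2) (b/2) i)]
          exact zadd _
    rw [Finset.sum_congr rfl key, Finset.sum_add_distrib,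
      Finset.sum_ite_eq' (range (n/2)) (a/2) (fun _ => lam (n/2) (b/2) (a/2)),
      Finset.sum_ite_eq' (range (n/2)) (b/2) (fun _ => lam (n/2) (a/2) (b/2)),
      if_pos (Finset.mem_range.mpr hja), if_pos (Finset.mem_range.mpr hjb)]
    exact lam_anti (n/2) (b/2) (a/2) (fun h => hjj h.symm)

lemma Q_Wv (n : ℕ) (hn : 2 ≤ n) (he : n % 2 = 0) (hm : (n/2) % 4 = 1) (a : ℕ) (ha : a < n) :
    Qform n hn (Wv n a) = 1 := by
  have hja : a/2 < n/2 := by omega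
  rw [Qform_eq n hn he]
  have key : ∀ i ∈ range (n/2),
      cf n (Wv n a) (2*i) * cf n (Wv n a) (2*i+1) = lam (n/2) (a/2) i := by
    intro i hi
    rw [Finset.mem_range] at hi
    rw [show (2*i : ℕ) = 2*i+0 by ring, cf_Wv n a i 0 hi (by omega),
      cf_Wv n a i 1 hi (by omega)]
    by_cases hia : i = a/2
    · rw [if_pos hia, if_pos hia, hia, lam_self]
      have : a % 2 = 0 ∨ a % 2 = 1 := by omega
      rcases this with h | h <;> simp [h]
    · rw [if_neg hia, if_neg hia, zmul]
  rw [Finset.sum_congr rfl key, sum_lam (n/2) (a/2) hm hja]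
  have e2 : cf n (Wv n a) (n-2)
      = if n/2-1 = a/2 then (if 0 = a%2 then 1 else 0) else lam (n/2) (a/2) (n/2-1) := by
    rw [show n-2 = 2*(n/2-1)+0 by omega]
    exact cf_Wv n a (n/2-1) 0 (by omega) (by omega)
  have e1 : cf n (Wv n a) (n-1)
      = if n/2-1 = a/2 then (if 1 = a%2 then 1 else 0) else lam (n/2) (a/2) (n/2-1) := by
    rw [show n-1 = 2*(n/2-1)+1 by omega]
    exact cf_Wv n a (n/2-1) 1 (by omega) (by omega)
  rw [e2, e1]
  by_cases hja2 : a/2 = n/2 - 1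
  · rw [if_pos hja2, if_pos hja2.symm, if_pos hja2.symm]
    have : a % 2 = 0 ∨ a % 2 = 1 := by omega
    rcases this with h | h <;> simp [h] <;> decide
  · rw [if_neg hja2, if_neg (fun h => hja2 h.symm), if_neg (fun h => hja2 h.symm)]
    rw [add_assoc, zadd, add_zero, add_zero]

def vn (n : ℕ) : Fin n → ZMod 2 := ∑ a ∈ range n, Wv n a

lemma Q_sum_W (n : ℕ) (hn : 2 ≤ n) (he : n % 2 = 0) (hm : (n/2) % 4 = 1)
    (s : Finset ℕ) (hs : s ⊆ range n) :
    Qform n hn (∑ a ∈ s, Wv n a)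
      = (s.card : ZMod 2) + ((s.card.choose 2 : ℕ) : ZMod 2) := by
  classical
  induction s using Finset.induction_on with
  | empty => simp [Q_zero]
  | @insert x s hx ih =>
    have hxr : x < n := Finset.mem_range.mp (hs (Finset.mem_insert_self x s))
    have hsub : s ⊆ range n := fun a ha => hs (Finset.mem_insert_of_mem ha)
    rw [Finset.sum_insert hx, Qadd n hn he, ih hsub, Bfun_sum_right]
    have hB : ∀ a ∈ s, Bfun n (Wv n x) (Wv n a) = 1 := by
      intro a ha
      exact B_Wv n he x a hxr (Finset.mem_range.mp (hsub ha)) (fun e => hx (e ▸ ha))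
    rw [Finset.sum_congr rfl hB, Finset.sum_const, Finset.card_insert_of_notMem hx,
      Q_Wv n hn he hm x hxr]
    have hch : (s.card + 1).choose 2 = s.card.choose 2 + s.card := by
      rw [Nat.choose_succ_succ]
      simp [Nat.choose_one_right, Nat.add_comm]
    rw [hch, nsmul_eq_mul, mul_one]
    push_cast
    ring

lemma Q_vn (n : ℕ) (hn : 2 ≤ n) (hmod : n % 8 = 2) : Qform n hn (vn n) = 1 := by
  have he : n % 2 = 0 := by omega
  have hm : (n/2) % 4 = 1 := by omega
  unfold vn
  rw [Q_sum_W n hn he hm (range n) (subset_refl _), Finset.card_range]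
  obtain ⟨k, hk⟩ : ∃ k, n = 8*k+2 := ⟨n/8, by omega⟩
  have h0 : (n : ZMod 2) = ((0:ℕ) : ZMod 2) := natcast2 n 0 (by omega)
  have hc : n.choose 2 = (4*k+1)*(8*k+1) := by
    rw [Nat.choose_two_right]
    have h1 : n * (n-1) = 2 * ((4*k+1)*(8*k+1)) := by
      have : n - 1 = 8*k+1 := by omega
      rw [this, hk]; ring
    rw [h1, Nat.mul_div_cancel_left _ (by norm_num)]
  have h2 : (((4*k+1)*(8*k+1) : ℕ) : ZMod 2) = ((1:ℕ) : ZMod 2) := by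
    apply natcast2
    have ha : (4*k+1) % 2 = 1 := by omega
    have hb : (8*k+1) % 2 = 1 := by omega
    rw [Nat.mul_mod, ha, hb]
  rw [h0, hc, h2]
  decide

lemma B_W_vn (n : ℕ) (he : n % 2 = 0) (b : ℕ) (hb : b < n) :
    Bfun n (Wv n b) (vn n) = 1 := by
  unfold vn
  rw [Bfun_sum_right]
  have key : ∀ a ∈ range n, Bfun n (Wv n b) (Wv n a)
      = 1 + (if a = b then (1:ZMod 2) else 0) := by
    intro a ha
    rw [Finset.mem_range] at ha
    by_cases hab : a = b
    · rw [if_pos hab, hab, Bfun_self]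
      decide
    · rw [if_neg hab, add_zero]
      exact B_Wv n he b a hb ha (fun e => hab e.symm)
  rw [Finset.sum_congr rfl key, Finset.sum_add_distrib, Finset.sum_const, Finset.card_range,
    Finset.sum_ite_eq' (range n) b (fun _ => (1:ZMod 2)), if_pos (Finset.mem_range.mpr hb),
    nsmul_eq_mul, mul_one, natcast2 n 0 (by omega)]
  decide

def uu (n a : ℕ) : Fin n → ZMod 2 :=
  if a < n then Wv n a else if a = n then vn n else 0

lemma Q_uu (n : ℕ) (hn : 2 ≤ n) (hmod : n % 8 = 2) (a : ℕ) (ha : a ≤ n) :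
    Qform n hn (uu n a) = 1 := by
  unfold uu
  by_cases h : a < n
  · rw [if_pos h]
    exact Q_Wv n hn (by omega) (by omega) a h
  · rw [if_neg h, if_pos (by omega : a = n)]
    exact Q_vn n hn hmod

lemma B_uu (n : ℕ) (hn : 2 ≤ n) (hmod : n % 8 = 2) (j k : ℕ) (hj : j < n+2) (hk : k < n+2) :
    Bfun n (uu n j) (uu n k)
      = if j = n+1 ∨ k = n+1 then 0 else if j = k then 0 else 1 := by
  have he : n % 2 = 0 := by omega
  by_cases hj1 : j = n+1
  · have : uu n j = 0 := by unfold uu; rw [if_neg (by omega), if_neg (by omega)]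
    rw [this, if_pos (Or.inl hj1), Bfun_symm, Bfun_zero_right]
  · by_cases hk1 : k = n+1
    · have : uu n k = 0 := by unfold uu; rw [if_neg (by omega), if_neg (by omega)]
      rw [this, if_pos (Or.inr hk1), Bfun_zero_right]
    · rw [if_neg (by tauto)]
      by_cases hjk : j = k
      · rw [if_pos hjk, hjk, Bfun_self]
      · rw [if_neg hjk]
        unfold uu
        by_cases hjn : j < n
        · by_cases hkn : k < n
          · rw [if_pos hjn, if_pos hkn]
            exact B_Wv n he j k hjn hkn hjk
          · rw [if_pos hjn, if_neg hkn, if_pos (by omega : k = n)]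
            exact B_W_vn n he j hjn
        · have hjn' : j = n := by omega
          have hkn : k < n := by omega
          rw [if_neg hjn, if_pos hjn', if_pos hkn, Bfun_symm]
          exact B_W_vn n he k hkn
lemma Q_uu_add (n : ℕ) (hn : 2 ≤ n) (hmod : n % 8 = 2) (j k : ℕ)
    (hj : j < n+2) (hk : k < n+2) (hjk : j ≠ k) :
    Qform n hn (uu n j + uu n k) = 1 := by
  have he : n % 2 = 0 := by omega
  by_cases hj1 : j = n+1
  · have h0 : uu n j = 0 := by unfold uu; rw [if_neg (by omega), if_neg (by omega)]
    rw [h0, zero_add]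
    exact Q_uu n hn hmod k (by omega)
  · by_cases hk1 : k = n+1
    · have h0 : uu n k = 0 := by unfold uu; rw [if_neg (by omega), if_neg (by omega)]
      rw [h0, add_zero]
      exact Q_uu n hn hmod j (by omega)
    · rw [Qadd n hn he, Q_uu n hn hmod j (by omega), Q_uu n hn hmod k (by omega),
        B_uu n hn hmod j k hj hk, if_neg (by tauto), if_neg hjk]
      decide

lemma zeq (a b : ZMod 2) (h : a + b = 0) : a = b := by revert a b; decide

lemma cf_eval (q : ℕ) (x : Fin q → ZMod 2) (k : ℕ) (h : k < q) : cf q x k = x ⟨k, h⟩ :=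
  dif_pos h

lemma linIndep_W (n : ℕ) (hn10 : 10 ≤ n) (hmod : n % 8 = 2) :
    LinearIndependent (ZMod 2) (fun a : Fin n => Wv n a.1) := by
  have he : n % 2 = 0 := by omega
  rw [Fintype.linearIndependent_iff]
  intro g hg
  have hB : ∀ b : Fin n, ∀ a : Fin n, Bfun n (Wv n b.1) (Wv n a.1)
      = 1 + (if a = b then (1:ZMod 2) else 0) := by
    intro b a
    by_cases hab : a = b
    · rw [if_pos hab, hab, Bfun_self]; decide
    · rw [if_neg hab, add_zero]
      exact B_Wv n he b.1 a.1 b.2 a.2 (fun e => hab (Fin.ext e.symm))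
  have key : ∀ b : Fin n, (∑ a : Fin n, g a) + g b = 0 := by
    intro b
    have h0 : Bfun n (Wv n b.1) (∑ a : Fin n, g a • Wv n a.1) = 0 := by
      rw [hg, Bfun_zero_right]
    rw [Bfun_sum_right] at h0
    have h1 : ∀ a : Fin n, Bfun n (Wv n b.1) (g a • Wv n a.1)
        = g a + g a * (if a = b then (1:ZMod 2) else 0) := by
      intro a
      rw [Bfun_smul_right, hB b a]
      ring
    rw [Finset.sum_congr rfl (fun a _ => h1 a), Finset.sum_add_distrib] at h0
    have h2 : ∑ a : Fin n, g a * (if a = b then (1:ZMod 2) else 0) = g b := by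
      rw [Finset.sum_congr rfl (fun a _ => by
        rw [mul_ite, mul_one, mul_zero] : ∀ a ∈ Finset.univ, g a * (if a = b then (1:ZMod 2) else 0) = if a = b then g a else 0)]
      rw [Finset.sum_ite_eq' Finset.univ b g, if_pos (Finset.mem_univ b)]
    rw [h2] at h0
    exact h0
  have hT : (∑ a : Fin n, g a) = 0 := by
    have h3 := key ⟨0, by omega⟩
    have h4 : ∀ b : Fin n, g b = ∑ a : Fin n, g a := by
      intro b
      exact (zeq _ _ (key b)).symm
    have h5 : (∑ a : Fin n, g a) = (n : ZMod 2) * (∑ a : Fin n, g a) := by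
      nth_rewrite 1 [Finset.sum_congr rfl (fun a _ => h4 a)]
      rw [Finset.sum_const, Finset.card_univ, Fintype.card_fin, nsmul_eq_mul]
    rw [natcast2 n 0 (by omega)] at h5
    simpa using h5
  intro i
  have := key i
  rw [hT, zero_add] at this
  exact this

lemma card_finrank (n : ℕ) :
    Fintype.card (Fin n) = Module.finrank (ZMod 2) (Fin n → ZMod 2) := by
  rw [Module.finrank_pi, Fintype.card_fin]

noncomputable def bW (n : ℕ) (hn10 : 10 ≤ n) (hmod : n % 8 = 2) :
    Module.Basis (Fin n) (ZMod 2) (Fin n → ZMod 2) :=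
  have : Nonempty (Fin n) := ⟨⟨0, by omega⟩⟩
  basisOfLinearIndependentOfCardEqFinrank (linIndep_W n hn10 hmod) (card_finrank n)

lemma bW_eq (n : ℕ) (hn10 : 10 ≤ n) (hmod : n % 8 = 2) (a : Fin n) :
    bW n hn10 hmod a = Wv n a.1 := by
  have : Nonempty (Fin n) := ⟨⟨0, by omega⟩⟩
  unfold bW
  rw [coe_basisOfLinearIndependentOfCardEqFinrank]

def Lt (n : ℕ) : (Fin (n+2) → ZMod 2) →ₗ[ZMod 2] (Fin n → ZMod 2) where
  toFun x := ∑ k ∈ range (n+2), cf (n+2) x k • uu n k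
  map_add' x y := by
    simp only [cf_add, add_smul]
    rw [Finset.sum_add_distrib]
  map_smul' c x := by
    simp only [cf_smul, mul_smul, RingHom.id_apply]
    rw [← Finset.smul_sum]

def SF (n : ℕ) : (Fin (n+2) → ZMod 2) →ₗ[ZMod 2] ZMod 2 where
  toFun x := ∑ k : Fin (n+2), x k
  map_add' x y := by
    simp only [Pi.add_apply]
    rw [Finset.sum_add_distrib]
  map_smul' c x := by
    simp only [Pi.smul_apply, smul_eq_mul, RingHom.id_apply]
    rw [← Finset.mul_sum]

lemma SF_eq_range (n : ℕ) (x : Fin (n+2) → ZMod 2) :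
    SF n x = ∑ k ∈ range (n+2), cf (n+2) x k := by
  show (∑ k : Fin (n+2), x k) = _
  rw [← Fin.sum_univ_eq_sum_range (fun k => cf (n+2) x k) (n+2)]
  apply Finset.sum_congr rfl
  intro k _
  rw [cf_eval (n+2) x k.1 k.2]

def jv (n : ℕ) : Fin (n+2) → ZMod 2 := fun _ => 1

def gv (n a : ℕ) : Fin (n+2) → ZMod 2 :=
  fun k => (if (k:ℕ) = a then 1 else 0) + (if (k:ℕ) = n+1 then 1 else 0)

lemma sum_single_smul {V : Type*} [AddCommMonoid V] [Module (ZMod 2) V]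
    (q c : ℕ) (hc : c < q) (f : ℕ → V) :
    ∑ k ∈ range q, (if k = c then (1:ZMod 2) else 0) • f k = f c := by
  have : ∀ k ∈ range q, (if k = c then (1:ZMod 2) else 0) • f k
      = if k = c then f k else 0 := by
    intro k _
    split_ifs <;> simp
  rw [Finset.sum_congr rfl this, Finset.sum_ite_eq' (range q) c f,
    if_pos (Finset.mem_range.mpr hc)]

lemma sum_single_one (q c : ℕ) (hc : c < q) :
    ∑ k ∈ range q, (if k = c then (1:ZMod 2) else 0) = 1 := by
  rw [Finset.sum_ite_eq' (range q) c (fun _ => (1:ZMod 2)), if_pos (Finset.mem_range.mpr hc)]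

lemma uu_lt (n k : ℕ) (h : k < n) : uu n k = Wv n k := by unfold uu; rw [if_pos h]
lemma uu_n (n : ℕ) (hn : 2 ≤ n) : uu n n = vn n := by
  unfold uu; rw [if_neg (by omega), if_pos rfl]
lemma uu_top (n : ℕ) : uu n (n+1) = 0 := by
  unfold uu; rw [if_neg (by omega), if_neg (by omega)]

lemma cf_gv (n a k : ℕ) (hk : k < n+2) :
    cf (n+2) (gv n a) k = (if k = a then 1 else 0) + (if k = n+1 then 1 else 0) := by
  rw [cf_eval (n+2) _ k hk]
  rfl

lemma Lt_gv (n a : ℕ) (ha : a ≤ n) : Lt n (gv n a) = uu n a := by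
  show (∑ k ∈ range (n+2), cf (n+2) (gv n a) k • uu n k) = uu n a
  rw [Finset.sum_congr rfl (fun k hk => by
    rw [cf_gv n a k (Finset.mem_range.mp hk), add_smul])]
  rw [Finset.sum_add_distrib, sum_single_smul (n+2) a (by omega) (uu n),
    sum_single_smul (n+2) (n+1) (by omega) (uu n), uu_top, add_zero]

lemma SF_gv (n a : ℕ) (ha : a ≤ n) : SF n (gv n a) = 0 := by
  rw [SF_eq_range]
  rw [Finset.sum_congr rfl (fun k hk => cf_gv n a k (Finset.mem_range.mp hk))]
  rw [Finset.sum_add_distrib, sum_single_one (n+2) a (by omega),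
    sum_single_one (n+2) (n+1) (by omega)]
  decide

noncomputable def Sm (n : ℕ) (hn10 : 10 ≤ n) (hmod : n % 8 = 2) :
    (Fin n → ZMod 2) →ₗ[ZMod 2] (Fin (n+2) → ZMod 2) :=
  (bW n hn10 hmod).constr (ZMod 2) (fun a : Fin n => gv n a.1)

lemma LtS (n : ℕ) (hn10 : 10 ≤ n) (hmod : n % 8 = 2) (w : Fin n → ZMod 2) :
    Lt n (Sm n hn10 hmod w) = w := by
  have h : (Lt n).comp (Sm n hn10 hmod) = LinearMap.id := by
    apply (bW n hn10 hmod).ext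
    intro i
    rw [LinearMap.comp_apply]
    unfold Sm
    rw [Module.Basis.constr_basis, Lt_gv n i.1 (by omega), uu_lt n i.1 i.2, LinearMap.id_apply,
      bW_eq]
  exact LinearMap.congr_fun h w

lemma SFS (n : ℕ) (hn10 : 10 ≤ n) (hmod : n % 8 = 2) (w : Fin n → ZMod 2) :
    SF n (Sm n hn10 hmod w) = 0 := by
  have h : (SF n).comp (Sm n hn10 hmod) = 0 := by
    apply (bW n hn10 hmod).ext
    intro i
    rw [LinearMap.comp_apply]
    unfold Sm
    rw [Module.Basis.constr_basis, SF_gv n i.1 (by omega)]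
    rfl
  exact LinearMap.congr_fun h w

lemma ker_lemma (n : ℕ) (hn10 : 10 ≤ n) (hmod : n % 8 = 2) (y : Fin (n+2) → ZMod 2)
    (h1 : SF n y = 0) (h2 : Lt n y = 0) : y = 0 ∨ y = jv n := by
  have he : n % 2 = 0 := by omega
  set yy := cf (n+2) y with hyy
  have hLt : Lt n y = ∑ k ∈ range n, (yy k + yy n) • Wv n k := by
    show (∑ k ∈ range (n+2), yy k • uu n k) = _
    rw [Finset.sum_range_succ, Finset.sum_range_succ, uu_top, uu_n n (by omega), smul_zero,
      add_zero]
    have hc : ∀ k ∈ range n, yy k • uu n k = yy k • Wv n k := by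
      intro k hk
      rw [uu_lt n k (Finset.mem_range.mp hk)]
    rw [Finset.sum_congr rfl hc]
    unfold vn
    rw [Finset.smul_sum, ← Finset.sum_add_distrib]
    apply Finset.sum_congr rfl
    intro k _
    rw [add_smul]
  have hfin : (∑ a : Fin n, (yy a.1 + yy n) • Wv n a.1) = 0 := by
    rw [Fin.sum_univ_eq_sum_range (fun k => (yy k + yy n) • Wv n k) n, ← hLt, h2]
  have hcoef := Fintype.linearIndependent_iff.mp (linIndep_W n hn10 hmod)
    (fun a : Fin n => yy a.1 + yy n) hfin
  have hconst : ∀ k, k < n → yy k = yy n := by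
    intro k hk
    exact zeq _ _ (hcoef ⟨k, hk⟩)
  have hSF : yy n + yy (n+1) = 0 := by
    rw [SF_eq_range] at h1
    rw [Finset.sum_range_succ, Finset.sum_range_succ] at h1
    have hz : ∑ k ∈ range n, yy k = (n : ZMod 2) * yy n := by
      rw [Finset.sum_congr rfl (fun k hk => hconst k (Finset.mem_range.mp hk)),
        Finset.sum_const, Finset.card_range, nsmul_eq_mul]
    rw [hz, natcast2 n 0 (by omega)] at h1
    simpa using h1
  have htop : yy (n+1) = yy n := (zeq _ _ hSF).symm
  have hall : ∀ k, k < n + 2 → yy k = yy n := by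
    intro k hk
    rcases (by omega : k < n ∨ k = n ∨ k = n + 1) with h | h | h
    · exact hconst k h
    · rw [h]
    · rw [h]; exact htop
  rcases z2 (yy n) with h0 | h0
  · left
    funext k
    have h3 := hall k.1 k.2
    have h4 : yy k.1 = y k := by
      show cf (n+2) y k.1 = y k
      rw [cf_eval (n+2) y k.1 k.2]
    rw [← h4, h3, h0]
    rfl
  · right
    funext k
    have h3 := hall k.1 k.2
    have h4 : yy k.1 = y k := by
      show cf (n+2) y k.1 = y k
      rw [cf_eval (n+2) y k.1 k.2]
    rw [← h4, h3, h0]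
    rfl

lemma addself {α : Type*} (v : α → ZMod 2) : v + v = 0 := funext fun k => zadd (v k)

def Pm (n : ℕ) (σ : Equiv.Perm (Fin (n+2))) :
    (Fin (n+2) → ZMod 2) →ₗ[ZMod 2] (Fin (n+2) → ZMod 2) where
  toFun x := x ∘ ⇑σ⁻¹
  map_add' x y := rfl
  map_smul' c x := rfl

lemma Pm_mul (n : ℕ) (σ τ : Equiv.Perm (Fin (n+2))) (x : Fin (n+2) → ZMod 2) :
    Pm n σ (Pm n τ x) = Pm n (σ * τ) x := by
  funext k
  show x (τ⁻¹ (σ⁻¹ k)) = x ((σ * τ)⁻¹ k)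
  rw [mul_inv_rev, Equiv.Perm.mul_apply]

lemma Pm_one (n : ℕ) (x : Fin (n+2) → ZMod 2) : Pm n 1 x = x := by
  funext k
  show x ((1 : Equiv.Perm (Fin (n+2)))⁻¹ k) = x k
  simp

lemma Pm_jv (n : ℕ) (σ : Equiv.Perm (Fin (n+2))) : Pm n σ (jv n) = jv n := rfl

lemma SF_Pm (n : ℕ) (σ : Equiv.Perm (Fin (n+2))) (x : Fin (n+2) → ZMod 2) :
    SF n (Pm n σ x) = SF n x := by
  show (∑ k : Fin (n+2), x (σ⁻¹ k)) = ∑ k : Fin (n+2), x k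
  exact Equiv.sum_comp σ⁻¹ x

lemma Lt_jv (n : ℕ) (hn : 2 ≤ n) : Lt n (jv n) = 0 := by
  show (∑ k ∈ range (n+2), cf (n+2) (jv n) k • uu n k) = 0
  have hc : ∀ k ∈ range (n+2), cf (n+2) (jv n) k • uu n k = uu n k := by
    intro k hk
    rw [cf_eval (n+2) (jv n) k (Finset.mem_range.mp hk)]
    show (1 : ZMod 2) • uu n k = uu n k
    rw [one_smul]
  rw [Finset.sum_congr rfl hc, Finset.sum_range_succ, Finset.sum_range_succ, uu_top,
    uu_n n hn, add_zero]
  have : ∀ k ∈ range n, uu n k = Wv n k := fun k hk => uu_lt n k (Finset.mem_range.mp hk)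
  rw [Finset.sum_congr rfl this]
  show vn n + vn n = 0
  exact addself _

noncomputable def Phi (n : ℕ) (hn10 : 10 ≤ n) (hmod : n % 8 = 2) (σ : Equiv.Perm (Fin (n+2))) :
    (Fin n → ZMod 2) →ₗ[ZMod 2] (Fin n → ZMod 2) :=
  (Lt n) ∘ₗ (Pm n σ) ∘ₗ (Sm n hn10 hmod)

lemma Phi_apply (n : ℕ) (hn10 : 10 ≤ n) (hmod : n % 8 = 2) (σ : Equiv.Perm (Fin (n+2)))
    (w : Fin n → ZMod 2) :
    Phi n hn10 hmod σ w = Lt n (Pm n σ (Sm n hn10 hmod w)) := rfl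

lemma Phi_mul (n : ℕ) (hn10 : 10 ≤ n) (hmod : n % 8 = 2) (σ τ : Equiv.Perm (Fin (n+2))) :
    Phi n hn10 hmod (σ * τ) = (Phi n hn10 hmod σ).comp (Phi n hn10 hmod τ) := by
  apply LinearMap.ext
  intro w
  rw [LinearMap.comp_apply, Phi_apply, Phi_apply, Phi_apply]
  set y := Pm n τ (Sm n hn10 hmod w) with hy
  have hySF : SF n y = 0 := by rw [SF_Pm]; exact SFS n hn10 hmod w
  set d := Sm n hn10 hmod (Lt n y) + y with hd
  have hd1 : SF n d = 0 := by
    rw [hd, map_add, SFS, hySF, add_zero]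
  have hd2 : Lt n d = 0 := by
    rw [hd, map_add, LtS]
    exact addself _
  have hS : Sm n hn10 hmod (Lt n y) = y + d := by
    rw [hd, add_comm (Sm n hn10 hmod (Lt n y)) y, ← add_assoc, addself, zero_add]
  rw [hS, map_add, map_add]
  have hzero : Lt n (Pm n σ d) = 0 := by
    rcases ker_lemma n hn10 hmod d hd1 hd2 with h | h
    · rw [h, map_zero, map_zero]
    · rw [h, Pm_jv, Lt_jv n (by omega)]
  rw [hzero, add_zero, hy, Pm_mul]

lemma Phi_one (n : ℕ) (hn10 : 10 ≤ n) (hmod : n % 8 = 2) :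
    Phi n hn10 hmod 1 = LinearMap.id := by
  apply LinearMap.ext
  intro w
  rw [Phi_apply, Pm_one, LtS, LinearMap.id_apply]

noncomputable def psi (n : ℕ) (hn10 : 10 ≤ n) (hmod : n % 8 = 2) :
    Equiv.Perm (Fin (n+2)) →* ((Fin n → ZMod 2) ≃ₗ[ZMod 2] (Fin n → ZMod 2)) where
  toFun σ := LinearEquiv.ofLinear (Phi n hn10 hmod σ) (Phi n hn10 hmod σ⁻¹)
    (by rw [← Phi_mul, mul_inv_cancel, Phi_one])
    (by rw [← Phi_mul, inv_mul_cancel, Phi_one])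
  map_one' := by
    apply LinearEquiv.ext
    intro w
    rw [LinearEquiv.ofLinear_apply, Phi_one]
    rfl
  map_mul' σ τ := by
    apply LinearEquiv.ext
    intro w
    rw [LinearEquiv.ofLinear_apply, Phi_mul]
    rfl

lemma psi_apply (n : ℕ) (hn10 : 10 ≤ n) (hmod : n % 8 = 2) (σ : Equiv.Perm (Fin (n+2)))
    (w : Fin n → ZMod 2) :
    psi n hn10 hmod σ w = Lt n (Pm n σ (Sm n hn10 hmod w)) := rfl

def ev (n : ℕ) (c : Fin (n+2)) : Fin (n+2) → ZMod 2 := fun k => if k = c then 1 else 0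

lemma cf_ev (n : ℕ) (c : Fin (n+2)) (k : ℕ) (hk : k < n+2) :
    cf (n+2) (ev n c) k = if k = c.1 then 1 else 0 := by
  rw [cf_eval (n+2) _ k hk]
  show (if (⟨k, hk⟩ : Fin (n+2)) = c then (1:ZMod 2) else 0) = _
  simp [Fin.ext_iff]

lemma Lt_ev (n : ℕ) (c : Fin (n+2)) : Lt n (ev n c) = uu n c.1 := by
  show (∑ k ∈ range (n+2), cf (n+2) (ev n c) k • uu n k) = uu n c.1
  rw [Finset.sum_congr rfl (fun k hk => by rw [cf_ev n c k (Finset.mem_range.mp hk)])]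
  exact sum_single_smul (n+2) c.1 c.2 (uu n)

lemma swap_decomp (n : ℕ) (a b : Fin (n+2)) (hab : a ≠ b) (x : Fin (n+2) → ZMod 2) :
    Pm n (Equiv.swap a b) x = x + (x a + x b) • (ev n a + ev n b) := by
  have key : ∀ p q : ZMod 2, q = p + (p + q) * (1 + 0) := by decide
  have key0 : ∀ p : ZMod 2, p = p + (0 : ZMod 2) * (0 + 0)  := by decide
  funext k
  show x ((Equiv.swap a b)⁻¹ k) = _
  rw [Equiv.swap_inv]
  simp only [Pi.add_apply, Pi.smul_apply, smul_eq_mul]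
  by_cases hka : k = a
  · rw [hka, Equiv.swap_apply_left]
    show x b = x a + (x a + x b) * (ev n a a + ev n b a)
    have h1 : ev n a a = 1 := if_pos rfl
    have h2 : ev n b a = 0 := if_neg hab
    rw [h1, h2]
    exact key _ _
  · by_cases hkb : k = b
    · rw [hkb, Equiv.swap_apply_right]
      show x a = x b + (x a + x b) * (ev n a b + ev n b b)
      have h1 : ev n a b = 0 := if_neg (fun h => hab h.symm)
      have h2 : ev n b b = 1 := if_pos rfl
      rw [h1, h2]
      have key' : ∀ p q : ZMod 2, p = q + (p + q) * (0 + 1) := by decide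
      exact key' _ _
    · rw [Equiv.swap_apply_of_ne_of_ne hka hkb]
      show x k = x k + (x a + x b) * (ev n a k + ev n b k)
      have h1 : ev n a k = 0 := if_neg hka
      have h2 : ev n b k = 0 := if_neg hkb
      rw [h1, h2]
      have key'' : ∀ p q : ZMod 2, p = p + q * (0 + 0) := by decide
      exact key'' _ _

lemma sum_single_mul (q t : ℕ) (ht : t < q) (c : ℕ → ZMod 2) :
    ∑ k ∈ range q, c k * (if k = t then 1 else 0) = c t := by
  have : ∀ k ∈ range q, c k * (if k = t then 1 else 0) = if k = t then c k else 0 := by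
    intro k _
    split_ifs <;> simp
  rw [Finset.sum_congr rfl this, Finset.sum_ite_eq' (range q) t c,
    if_pos (Finset.mem_range.mpr ht)]

lemma B_Lt (n : ℕ) (x : Fin (n+2) → ZMod 2) (v : Fin n → ZMod 2) :
    Bfun n (Lt n x) v = ∑ k ∈ range (n+2), cf (n+2) x k * Bfun n (uu n k) v := by
  rw [Bfun_symm]
  show Bfun n v (∑ k ∈ range (n+2), cf (n+2) x k • uu n k) = _
  rw [Bfun_sum_right]
  apply Finset.sum_congr rfl
  intro k _
  rw [Bfun_smul_right, Bfun_symm]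

lemma claim_aux (n : ℕ) (hn10 : 10 ≤ n) (hmod : n % 8 = 2) (a b : Fin (n+2))
    (hab : a ≠ b) (hb : b.1 = n+1) (x : Fin (n+2) → ZMod 2) (hx : SF n x = 0) :
    x a + x b = Bfun n (Lt n x) (uu n a.1 + uu n b.1) := by
  have hn2 : 2 ≤ n := by omega
  have ha1 : a.1 ≠ n+1 := fun h => hab (Fin.ext (h.trans hb.symm))
  rw [B_Lt]
  have hG : ∀ k ∈ range (n+2),
      cf (n+2) x k * Bfun n (uu n k) (uu n a.1 + uu n b.1)
      = cf (n+2) x k * (1 + (if k = a.1 then 1 else 0) + (if k = n+1 then 1 else 0)) := by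
    intro k hk
    rw [Finset.mem_range] at hk
    congr 1
    rw [Bfun_add_right, B_uu n hn2 hmod k a.1 hk a.2, B_uu n hn2 hmod k b.1 hk b.2]
    split_ifs <;> first | decide | omega
  rw [Finset.sum_congr rfl hG]
  have expand : ∀ k ∈ range (n+2),
      cf (n+2) x k * (1 + (if k = a.1 then 1 else 0) + (if k = n+1 then 1 else 0))
      = cf (n+2) x k + (cf (n+2) x k * (if k = a.1 then 1 else 0)
          + cf (n+2) x k * (if k = n+1 then 1 else 0)) := by
    intro k _
    ring
  rw [Finset.sum_congr rfl expand, Finset.sum_add_distrib, Finset.sum_add_distrib,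
    sum_single_mul (n+2) a.1 a.2 _, sum_single_mul (n+2) (n+1) (by omega) _,
    ← SF_eq_range, hx, zero_add]
  have hxa : cf (n+2) x a.1 = x a := by rw [cf_eval (n+2) x a.1 a.2]
  have hxb : cf (n+2) x (n+1) = x b := by
    rw [cf_eval (n+2) x (n+1) (by omega)]
    congr 1
    exact (Fin.ext hb).symm
  rw [hxa, hxb]

lemma claim (n : ℕ) (hn10 : 10 ≤ n) (hmod : n % 8 = 2) (a b : Fin (n+2))
    (hab : a ≠ b) (x : Fin (n+2) → ZMod 2) (hx : SF n x = 0) :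
    x a + x b = Bfun n (Lt n x) (uu n a.1 + uu n b.1) := by
  have hn2 : 2 ≤ n := by omega
  by_cases hb : b.1 = n+1
  · exact claim_aux n hn10 hmod a b hab hb x hx
  · by_cases ha : a.1 = n+1
    · rw [add_comm (x a) (x b), add_comm (uu n a.1) (uu n b.1)]
      exact claim_aux n hn10 hmod b a (fun h => hab h.symm) ha x hx
    · rw [B_Lt]
      have hG : ∀ k ∈ range (n+2),
          cf (n+2) x k * Bfun n (uu n k) (uu n a.1 + uu n b.1)
          = cf (n+2) x k * (if k = a.1 then 1 else 0)
            + cf (n+2) x k * (if k = b.1 then 1 else 0) := by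
        intro k hk
        rw [Finset.mem_range] at hk
        rw [← mul_add]
        congr 1
        rw [Bfun_add_right, B_uu n hn2 hmod k a.1 hk a.2, B_uu n hn2 hmod k b.1 hk b.2]
        have hne : a.1 ≠ b.1 := fun h => hab (Fin.ext h)
        split_ifs <;> first | decide | omega
      rw [Finset.sum_congr rfl hG, Finset.sum_add_distrib,
        sum_single_mul (n+2) a.1 a.2 _, sum_single_mul (n+2) b.1 b.2 _,
        cf_eval (n+2) x a.1 a.2, cf_eval (n+2) x b.1 b.2]

lemma psi_swap (n : ℕ) (hn10 : 10 ≤ n) (hmod : n % 8 = 2) (a b : Fin (n+2)) (hab : a ≠ b)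
    (w : Fin n → ZMod 2) :
    psi n hn10 hmod (Equiv.swap a b) w
      = w + Bfun n w (uu n a.1 + uu n b.1) • (uu n a.1 + uu n b.1) := by
  rw [psi_apply, swap_decomp n a b hab, map_add, LtS, map_smul, map_add, Lt_ev, Lt_ev]
  have hc := claim n hn10 hmod a b hab (Sm n hn10 hmod w) (SFS n hn10 hmod w)
  rw [LtS] at hc
  rw [← hc]

lemma psi_one_apply (n : ℕ) (w : Fin n → ZMod 2) :
    (1 : (Fin n → ZMod 2) ≃ₗ[ZMod 2] (Fin n → ZMod 2)) w = w := rfl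

lemma SF_x0 (n : ℕ) (a b : Fin (n+2)) (hab : a ≠ b) : SF n (ev n a + ev n b) = 0 := by
  rw [map_add]
  have h : ∀ c : Fin (n+2), SF n (ev n c) = 1 := by
    intro c
    rw [SF_eq_range, Finset.sum_congr rfl (fun k hk => cf_ev n c k (Finset.mem_range.mp hk)),
      sum_single_one (n+2) c.1 c.2]
  rw [h, h]
  decide

lemma subclaim (n : ℕ) (hn10 : 10 ≤ n) (hmod : n % 8 = 2) (σ : Equiv.Perm (Fin (n+2)))
    (hw : ∀ w, Lt n (Pm n σ (Sm n hn10 hmod w)) = w)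
    (a b : Fin (n+2)) (hab : a ≠ b) : σ a = a ∨ σ a = b := by
  have hn2 : 2 ≤ n := by omega
  set x0 := ev n a + ev n b with hx0def
  have hx0 : SF n x0 = 0 := SF_x0 n a b hab
  set w := Lt n x0 with hwdef
  set y := Sm n hn10 hmod w with hydef
  set d1 := y + x0 with hd1def
  have hd1SF : SF n d1 = 0 := by rw [hd1def, map_add, SFS, hx0, add_zero]
  have hd1Lt : Lt n d1 = 0 := by
    rw [hd1def, map_add, hydef, LtS]
    exact addself _
  set d2 := Pm n σ y + y with hd2def
  have hd2SF : SF n d2 = 0 := by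
    rw [hd2def, map_add, SF_Pm, hydef, SFS]
    simp
  have hd2Lt : Lt n d2 = 0 := by
    rw [hd2def, map_add, hydef, hw w, LtS]
    exact addself _
  have hy : y = x0 + d1 := by
    rw [hd1def, add_comm y x0, ← add_assoc, addself, zero_add]
  have hPd1 : Pm n σ d1 = d1 := by
    rcases ker_lemma n hn10 hmod d1 hd1SF hd1Lt with h | h
    · rw [h, map_zero]
    · rw [h, Pm_jv]
  have hPy : Pm n σ y = y + d2 := by
    rw [hd2def, add_comm (Pm n σ y) y, ← add_assoc, addself, zero_add]
  have hPadd : Pm n σ d1 = Pm n σ y + Pm n σ x0 := by rw [hd1def, map_add]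
  have hPx0 : Pm n σ x0 = x0 + d2 := by
    funext k
    have e1 := congrFun hPadd k
    have e2 := congrFun hPd1 k
    have e3 := congrFun hPy k
    have e4 : d1 k = y k + x0 k := rfl
    have e5 : d2 k = Pm n σ y k + y k := rfl
    simp only [Pi.add_apply] at e1 e3 ⊢
    rw [e4] at e2
    linear_combination (-1 : ZMod 2)*e1 + e2 - e3 - (d2 k) * ztwo
  rcases ker_lemma n hn10 hmod d2 hd2SF hd2Lt with h2 | h2
  · rw [h2, add_zero] at hPx0
    have heval : x0 (σ a) = 1 := by
      have := congrFun hPx0 (σ a)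
      have hL : Pm n σ x0 (σ a) = x0 a := by
        show x0 (σ⁻¹ (σ a)) = x0 a
        simp
      rw [hL] at this
      rw [← this]
      show ev n a a + ev n b a = 1
      simp only [ev]
      rw [if_neg hab]
      simp
    have : (if σ a = a then (1:ZMod 2) else 0) + (if σ a = b then 1 else 0) = 1 := heval
    by_contra hcon
    push_neg at hcon
    rw [if_neg hcon.1, if_neg hcon.2] at this
    exact absurd this (by decide)
  · exfalso
    rw [h2] at hPx0
    have hcompl : ∃ k0 : Fin (n+2), k0 ≠ a ∧ k0 ≠ b ∧ k0 ≠ σ a ∧ k0 ≠ σ b := by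
      classical
      set s : Finset (Fin (n+2)) := {a, b, σ a, σ b} with hs
      have hcard : s.card ≤ 4 := by
        apply le_trans (Finset.card_insert_le _ _)
        have : (insert b (insert (σ a) ({σ b} : Finset (Fin (n+2))))).card ≤ 3 := by
          apply le_trans (Finset.card_insert_le _ _)
          have : (insert (σ a) ({σ b} : Finset (Fin (n+2)))).card ≤ 2 := by
            apply le_trans (Finset.card_insert_le _ _)
            simp
          omega
        omega
      have hne : (sᶜ : Finset (Fin (n+2))).Nonempty := by
        rw [← Finset.card_pos, Finset.card_compl]
        have : Fintype.card (Fin (n+2)) = n+2 := Fintype.card_fin _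
        omega
      obtain ⟨k0, hk0⟩ := hne
      rw [Finset.mem_compl, hs] at hk0
      simp only [Finset.mem_insert, Finset.mem_singleton, not_or] at hk0
      exact ⟨k0, hk0.1, hk0.2.1, hk0.2.2.1, hk0.2.2.2⟩
    obtain ⟨k0, hka, hkb, hksa, hksb⟩ := hcompl
    have := congrFun hPx0 k0
    have hL : Pm n σ x0 k0 = x0 (σ⁻¹ k0) := rfl
    have hinva : σ⁻¹ k0 ≠ a := by
      intro h
      exact hksa (by rw [← h]; simp)
    have hinvb : σ⁻¹ k0 ≠ b := by
      intro h
      exact hksb (by rw [← h]; simp)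
    have hLval : x0 (σ⁻¹ k0) = 0 := by
      show ev n a (σ⁻¹ k0) + ev n b (σ⁻¹ k0) = 0
      simp only [ev]
      rw [if_neg hinva, if_neg hinvb]
      decide
    have hRval : (x0 + jv n) k0 = 1 := by
      show x0 k0 + 1 = 1
      have : x0 k0 = 0 := by
        show ev n a k0 + ev n b k0 = 0
        simp only [ev]
        rw [if_neg hka, if_neg hkb]
        decide
      rw [this]
      decide
    rw [hL, hLval, hRval] at this
    exact absurd this (by decide)

lemma psi_injective (n : ℕ) (hn10 : 10 ≤ n) (hmod : n % 8 = 2) :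
    Function.Injective (psi n hn10 hmod) := by
  rw [injective_iff_map_eq_one]
  intro σ hσ
  have hw : ∀ w, Lt n (Pm n σ (Sm n hn10 hmod w)) = w := by
    intro w
    rw [← psi_apply, hσ, psi_one_apply]
  apply Equiv.ext
  intro a
  have f0 : Fin (n+2) := ⟨0, by omega⟩
  obtain ⟨b, c, hbc, hb, hc⟩ : ∃ b c : Fin (n+2), b ≠ c ∧ a ≠ b ∧ a ≠ c := by
    have h01 : (⟨0, by omega⟩ : Fin (n+2)) ≠ ⟨1, by omega⟩ := by simp [Fin.ext_iff]
    have h02 : (⟨0, by omega⟩ : Fin (n+2)) ≠ ⟨2, by omega⟩ := by simp [Fin.ext_iff]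
    have h12 : (⟨1, by omega⟩ : Fin (n+2)) ≠ ⟨2, by omega⟩ := by simp [Fin.ext_iff]
    by_cases ha0 : a = ⟨0, by omega⟩
    · exact ⟨⟨1, by omega⟩, ⟨2, by omega⟩, h12, by rw [ha0]; exact h01, by rw [ha0]; exact h02⟩
    · by_cases ha1 : a = ⟨1, by omega⟩
      · exact ⟨⟨0, by omega⟩, ⟨2, by omega⟩, h02, by rw [ha1]; exact fun h => h01 h.symm,
          by rw [ha1]; exact h12⟩
      · exact ⟨⟨0, by omega⟩, ⟨1, by omega⟩, h01, ha0, ha1⟩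
  rcases subclaim n hn10 hmod σ hw a b hb with h1 | h1
  · rw [h1]; rfl
  · rcases subclaim n hn10 hmod σ hw a c hc with h2 | h2
    · rw [h2]; rfl
    · exfalso
      exact hbc (h1.symm.trans h2)

lemma exists_B_one (n : ℕ) (he : n % 2 = 0) (v : Fin n → ZMod 2) (hv : v ≠ 0) :
    ∃ x : Fin n → ZMod 2, Bfun n x v = 1 := by
  obtain ⟨k, hk⟩ : ∃ k : Fin n, v k ≠ 0 := by
    by_contra h
    push_neg at h
    exact hv (funext fun k => h k)
  have hk1 : v k = 1 := by rcases z2 (v k) with h | h; exact absurd h hk; exact h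
  have hkn := k.2
  set i := k.1 / 2 with hi
  have hin : i < n / 2 := by omega
  by_cases hpar : k.1 % 2 = 0
  · refine ⟨fun t => if t.1 = 2*i+1 then 1 else 0, ?_⟩
    unfold Bfun
    have hterm : ∀ i' ∈ range (n/2),
        cf n (fun t => if t.1 = 2*i+1 then (1:ZMod 2) else 0) (2*i') * cf n v (2*i'+1)
          + cf n (fun t => if t.1 = 2*i+1 then (1:ZMod 2) else 0) (2*i'+1) * cf n v (2*i')
        = if i' = i then cf n v (2*i') else 0 := by
      intro i' hi'
      rw [Finset.mem_range] at hi'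
      have h1 : cf n (fun t => if t.1 = 2*i+1 then (1:ZMod 2) else 0) (2*i') = 0 := by
        rw [cf_eval n _ (2*i') (by omega)]
        show (if 2*i' = 2*i+1 then (1:ZMod 2) else 0) = 0
        exact if_neg (by omega)
      have h2 : cf n (fun t => if t.1 = 2*i+1 then (1:ZMod 2) else 0) (2*i'+1)
          = if i' = i then 1 else 0 := by
        rw [cf_eval n _ (2*i'+1) (by omega)]
        show (if 2*i'+1 = 2*i+1 then (1:ZMod 2) else 0) = _
        split_ifs <;> first | rfl | omega
      rw [h1, h2, zero_mul, zero_add]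
      split_ifs <;> ring
    rw [Finset.sum_congr rfl hterm, Finset.sum_ite_eq' (range (n/2)) i _,
      if_pos (Finset.mem_range.mpr hin)]
    rw [cf_eval n v (2*i) (by omega)]
    have heq : (⟨2*i, by omega⟩ : Fin n) = k := by
      apply Fin.ext
      show 2*i = k.1
      omega
    rw [heq, hk1]
  · refine ⟨fun t => if t.1 = 2*i then 1 else 0, ?_⟩
    unfold Bfun
    have hterm : ∀ i' ∈ range (n/2),
        cf n (fun t => if t.1 = 2*i then (1:ZMod 2) else 0) (2*i') * cf n v (2*i'+1)
          + cf n (fun t => if t.1 = 2*i then (1:ZMod 2) else 0) (2*i'+1) * cf n v (2*i')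
        = if i' = i then cf n v (2*i'+1) else 0 := by
      intro i' hi'
      rw [Finset.mem_range] at hi'
      have h1 : cf n (fun t => if t.1 = 2*i then (1:ZMod 2) else 0) (2*i')
          = if i' = i then 1 else 0 := by
        rw [cf_eval n _ (2*i') (by omega)]
        show (if 2*i' = 2*i then (1:ZMod 2) else 0) = _
        split_ifs <;> first | rfl | omega
      have h2 : cf n (fun t => if t.1 = 2*i then (1:ZMod 2) else 0) (2*i'+1) = 0 := by
        rw [cf_eval n _ (2*i'+1) (by omega)]
        show (if 2*i'+1 = 2*i then (1:ZMod 2) else 0) = 0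
        exact if_neg (by omega)
      rw [h1, h2, zero_mul, add_zero]
      split_ifs <;> ring
    rw [Finset.sum_congr rfl hterm, Finset.sum_ite_eq' (range (n/2)) i _,
      if_pos (Finset.mem_range.mpr hin)]
    rw [cf_eval n v (2*i+1) (by omega)]
    have heq : (⟨2*i+1, by omega⟩ : Fin n) = k := by
      apply Fin.ext
      show 2*i+1 = k.1
      omega
    rw [heq, hk1]

lemma transvect_sq (n : ℕ) (vi vj : Fin n → ZMod 2)
    (h0 : Bfun n vj vi = 0) (h0' : Bfun n vi vj = 0)
    (f g : (Fin n → ZMod 2) → (Fin n → ZMod 2))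
    (hf : ∀ w, f w = w + Bfun n w vi • vi) (hg : ∀ w, g w = w + Bfun n w vj • vj)
    (w : Fin n → ZMod 2) : f (g (f (g w))) = w := by
  rw [hg w, hf _, hg _, hf _]
  simp only [Bfun_add_left, Bfun_smul_left, Bfun_self, h0, h0', mul_zero, add_zero, zero_add]
  funext k
  simp only [Pi.add_apply, Pi.smul_apply, smul_eq_mul]
  linear_combination (Bfun n w vj * vj k + Bfun n w vi * vi k) * ztwo

section Neg
variable (n : ℕ)

def tau (n : ℕ) (i : Fin (n+2)) : Equiv.Perm (Fin (n+3)) :=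
  Equiv.swap ⟨i.1, by omega⟩ ⟨i.1+1, by omega⟩

lemma tau_isSwap (i : Fin (n+2)) : (tau n i).IsSwap := by
  refine ⟨_, _, ?_, rfl⟩
  intro h
  rw [Fin.mk.injEq] at h
  omega

lemma tau_fix (i : Fin (n+2)) (x : ℕ) (hx : x < n+3) (h1 : x ≠ i.1) (h2 : x ≠ i.1+1) :
    tau n i ⟨x, hx⟩ = ⟨x, hx⟩ := by
  apply Equiv.swap_apply_of_ne_of_ne
  · intro h
    rw [Fin.mk.injEq] at h
    omega
  · intro h
    rw [Fin.mk.injEq] at h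
    omega

lemma tau_left (i : Fin (n+2)) (h1 : i.1 < n+3) (h2 : i.1+1 < n+3) :
    tau n i ⟨i.1, h1⟩ = ⟨i.1+1, h2⟩ :=
  Equiv.swap_apply_left _ _

lemma tau_right (i : Fin (n+2)) (h1 : i.1 < n+3) (h2 : i.1+1 < n+3) :
    tau n i ⟨i.1+1, h2⟩ = ⟨i.1, h1⟩ :=
  Equiv.swap_apply_right _ _

lemma tau_ne (i j : Fin (n+2)) (hij : i.1 + 2 ≤ j.1) : tau n i ≠ tau n j := by
  intro hc
  have h2 := tau_left n i (by omega) (by omega)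
  rw [hc] at h2
  rw [tau_fix n j i.1 (by omega) (by omega) (by omega)] at h2
  rw [Fin.mk.injEq] at h2
  omega

lemma tau_val (i : Fin (n+2)) (xv : ℕ) (hxv : xv < n+3) :
    (tau n i ⟨xv, hxv⟩).1 = if xv = i.1 then i.1+1 else if xv = i.1+1 then i.1 else xv := by
  by_cases h1 : xv = i.1
  · have hx : (⟨xv, hxv⟩ : Fin (n+3)) = ⟨i.1, by omega⟩ := Fin.ext (by show xv = i.1; omega)
    rw [hx, tau_left n i (by omega) (by omega), if_pos h1]
  · by_cases h2 : xv = i.1+1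
    · have hx : (⟨xv, hxv⟩ : Fin (n+3)) = ⟨i.1+1, by omega⟩ := Fin.ext (by show xv = i.1+1; omega)
      rw [hx, tau_right n i (by omega) (by omega), if_neg h1, if_pos h2]
    · rw [tau_fix n i xv hxv h1 h2, if_neg h1, if_neg h2]

end Neg

lemma neg_part (n : ℕ) (hn10 : 10 ≤ n) (hmod : n % 8 = 2) (hn2 : 2 ≤ n) :
    ¬ (∃ ψ : Equiv.Perm (Fin (n + 3)) →* ((Fin n → ZMod 2) ≃ₗ[ZMod 2] (Fin n → ZMod 2)),
      Function.Injective ψ ∧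
      ∀ τ : Equiv.Perm (Fin (n + 3)), τ.IsSwap →
        ∃ v : Fin n → ZMod 2, Qform n hn2 v = 1 ∧
          ∀ w, (ψ τ) w = w + polarForm (Qform n hn2) w v • v) := by
  rintro ⟨ψ, hinj, hswap⟩
  have he : n % 2 = 0 := by omega
  choose v hQ hT using fun i : Fin (n+2) => hswap (tau n i) (tau_isSwap n i)
  have hT' : ∀ (i : Fin (n+2)) (w : Fin n → ZMod 2),
      ψ (tau n i) w = w + Bfun n w (v i) • v i := by
    intro i w
    rw [hT i w, polar_eq n hn2 he]
  have hvne : ∀ i, v i ≠ 0 := by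
    intro i h
    have hq := hQ i
    rw [h, Q_zero] at hq
    exact absurd hq (by decide)
  -- adjacent pairs pair to 1
  have hB_adj : ∀ i j : Fin (n+2), j.1 = i.1 + 1 → Bfun n (v i) (v j) = 1 := by
    intro i j hij
    by_contra hB
    have hB0 : Bfun n (v i) (v j) = 0 := by
      rcases z2 (Bfun n (v i) (v j)) with h | h
      · exact h
      · exact absurd h hB
    have hB0' : Bfun n (v j) (v i) = 0 := by rw [Bfun_symm]; exact hB0
    have hsq : ψ ((tau n i * tau n j)^2) = 1 := by
      rw [map_pow, map_mul]
      apply LinearEquiv.ext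
      intro w
      have hh : ((ψ (tau n i) * ψ (tau n j))^2) w
          = ψ (tau n i) (ψ (tau n j) (ψ (tau n i) (ψ (tau n j) w))) := by
        rw [pow_two]
        rfl
      rw [hh, transvect_sq n (v i) (v j) hB0' hB0 (ψ (tau n i)) (ψ (tau n j))
        (hT' i) (hT' j) w]
      rfl
    have hone : (tau n i * tau n j)^2 = 1 := hinj (by rw [hsq, map_one])
    have hev : ((tau n i * tau n j)^2) ⟨i.1, by omega⟩ = ⟨i.1+2, by omega⟩ := by
      rw [pow_two]
      show tau n i (tau n j (tau n i (tau n j ⟨i.1, by omega⟩))) = _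
      rw [tau_fix n j i.1 (by omega) (by omega) (by omega), tau_left n i (by omega) (by omega)]
      have hj1 : (⟨i.1+1, by omega⟩ : Fin (n+3)) = ⟨j.1, by omega⟩ :=
        Fin.ext (by show i.1+1 = j.1; omega)
      rw [hj1, tau_left n j (by omega) (by omega),
        tau_fix n i (j.1+1) (by omega) (by omega) (by omega)]
      exact Fin.ext (by show j.1+1 = i.1+2; omega)
    rw [hone] at hev
    rw [Equiv.Perm.one_apply, Fin.mk.injEq] at hev
    omega
  -- distant pairs pair to 0
  have hB_far : ∀ i j : Fin (n+2), i.1 + 2 ≤ j.1 → Bfun n (v i) (v j) = 0 := by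
    intro i j hij
    by_contra hB
    have hB1 : Bfun n (v i) (v j) = 1 := by
      rcases z2 (Bfun n (v i) (v j)) with h | h
      · exact absurd h hB
      · exact h
    have hB1' : Bfun n (v j) (v i) = 1 := by rw [Bfun_symm]; exact hB1
    have hcommtau : tau n i * tau n j = tau n j * tau n i := by
      apply Equiv.ext
      intro x
      obtain ⟨xv, hxv⟩ := x
      show tau n i (tau n j ⟨xv, hxv⟩) = tau n j (tau n i ⟨xv, hxv⟩)
      apply Fin.ext
      have e1 := tau_val n j xv hxv
      have e2 := tau_val n i xv hxv
      have e3 := tau_val n i (tau n j ⟨xv, hxv⟩).1 (tau n j ⟨xv, hxv⟩).2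
      have e4 := tau_val n j (tau n i ⟨xv, hxv⟩).1 (tau n i ⟨xv, hxv⟩).2
      rw [Fin.eta] at e3 e4
      rw [e3, e4, e1, e2]
      split_ifs <;> omega
    -- apply commutation to a witness vector
    obtain ⟨x, hx⟩ := exists_B_one n he (v j) (hvne j)
    have hcomm := congrArg (fun f => ψ f x) hcommtau
    simp only [map_mul] at hcomm
    have hcomm2 : ψ (tau n i) (ψ (tau n j) x) = ψ (tau n j) (ψ (tau n i) x) := hcomm
    rw [hT' j x, hT' i _, hT' i x, hT' j _] at hcomm2
    simp only [Bfun_add_left, Bfun_smul_left, Bfun_self, hB1, hB1', mul_zero, add_zero,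
      mul_one, hx] at hcomm2
    -- hcomm2 : x + vj + (Bxvi + 1) • vi = x + Bxvi • vi + (1 + Bxvi) • vj
    have hvivj : v i = v j ∨ v i = 0 := by
      rcases z2 (Bfun n x (v i)) with ha | ha
      · right
        funext k
        have hk := congrFun hcomm2 k
        rw [ha] at hk
        simp only [Pi.add_apply, Pi.smul_apply, smul_eq_mul] at hk
        show v i k = 0
        linear_combination hk
      · left
        funext k
        have hk := congrFun hcomm2 k
        rw [ha] at hk
        simp only [Pi.add_apply, Pi.smul_apply, smul_eq_mul] at hk
        linear_combination hk
    rcases hvivj with hvv | hvv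
    · have hpsieq : ψ (tau n i) = ψ (tau n j) := by
        apply LinearEquiv.ext
        intro w
        rw [hT' i w, hT' j w, hvv]
      exact tau_ne n i j hij (hinj hpsieq)
    · exact hvne i hvv
  -- the Gram matrix of v
  have hBv : ∀ k i : Fin (n+2), Bfun n (v k) (v i)
      = if k.1 = i.1 + 1 ∨ i.1 = k.1 + 1 then 1 else 0 := by
    intro k i
    rcases (by omega : i.1 = k.1 ∨ i.1 = k.1+1 ∨ k.1 = i.1+1 ∨ i.1 + 2 ≤ k.1 ∨
      k.1 + 2 ≤ i.1) with h | h | h | h | h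
    · have : i = k := Fin.ext h
      rw [this, if_neg (by omega), Bfun_self]
    · rw [if_pos (Or.inr h)]
      exact hB_adj k i h
    · rw [if_pos (Or.inl h)]
      rw [Bfun_symm]
      exact hB_adj i k h
    · rw [if_neg (by omega), Bfun_symm]
      exact hB_far i k h
    · rw [if_neg (by omega)]
      exact hB_far k i h
  -- linear independence
  have hindep : LinearIndependent (ZMod 2) v := by
    rw [Fintype.linearIndependent_iff]
    intro g hg
    set gg : ℕ → ZMod 2 := fun t => if h : t < n+2 then g ⟨t, h⟩ else 0 with hgg
    have hrow : ∀ k : Fin (n+2),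
        (∑ i : Fin (n+2), g i * (if k.1 = i.1 + 1 ∨ i.1 = k.1 + 1 then (1:ZMod 2) else 0)) = 0 := by
      intro k
      have h0 : Bfun n (v k) (∑ i : Fin (n+2), g i • v i) = 0 := by rw [hg, Bfun_zero_right]
      rw [Bfun_sum_right] at h0
      calc (∑ i : Fin (n+2), g i * (if k.1 = i.1 + 1 ∨ i.1 = k.1 + 1 then (1:ZMod 2) else 0))
          = ∑ i : Fin (n+2), Bfun n (v k) (g i • v i) := by
            apply Finset.sum_congr rfl
            intro i _
            rw [Bfun_smul_right, hBv k i]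
        _ = 0 := h0
    have hsingle : ∀ (c : Fin (n+2)), (∑ i : Fin (n+2), g i * (if i = c then (1:ZMod 2) else 0)) = g c := by
      intro c
      have h1 : ∀ i ∈ Finset.univ, g i * (if i = c then (1:ZMod 2) else 0)
          = if i = c then g i else 0 := by
        intro i _
        split_ifs <;> simp
      rw [Finset.sum_congr rfl h1, Finset.sum_ite_eq' Finset.univ c g, if_pos (Finset.mem_univ c)]
    have hg1 : gg 1 = 0 := by
      have h1 := hrow ⟨0, by omega⟩
      have h2 : ∀ i : Fin (n+2), (if (0:ℕ) = i.1 + 1 ∨ i.1 = 0 + 1 then (1:ZMod 2) else 0)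
          = if i = ⟨1, by omega⟩ then 1 else 0 := by
        intro i
        by_cases hi : i.1 = 1
        · rw [if_pos (by omega), if_pos (by apply Fin.ext; show i.1 = 1; omega)]
        · rw [if_neg (by omega), if_neg (by intro hc; apply hi; rw [hc])]
      rw [Finset.sum_congr rfl (fun i _ => by rw [h2 i])] at h1
      rw [hsingle ⟨1, by omega⟩] at h1
      show (if h : (1:ℕ) < n+2 then g ⟨1, h⟩ else 0) = 0
      rw [dif_pos (by omega : (1:ℕ) < n+2)]
      exact h1
    have hgn : gg n = 0 := by
      have h1 := hrow ⟨n+1, by omega⟩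
      have h2 : ∀ i : Fin (n+2), (if (n+1:ℕ) = i.1 + 1 ∨ i.1 = (n+1) + 1 then (1:ZMod 2) else 0)
          = if i = ⟨n, by omega⟩ then 1 else 0 := by
        intro i
        by_cases hi : i.1 = n
        · rw [if_pos (by omega), if_pos (by apply Fin.ext; show i.1 = n; omega)]
        · rw [if_neg (by omega), if_neg (by intro hc; apply hi; rw [hc])]
      rw [Finset.sum_congr rfl (fun i _ => by rw [h2 i])] at h1
      rw [hsingle ⟨n, by omega⟩] at h1
      show (if h : (n:ℕ) < n+2 then g ⟨n, h⟩ else 0) = 0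
      rw [dif_pos (by omega : (n:ℕ) < n+2)]
      exact h1
    have hstep : ∀ t : ℕ, t + 2 < n + 2 → gg (t+2) = gg t := by
      intro t ht
      have h1 := hrow ⟨t+1, by omega⟩
      have h2 : ∀ i : Fin (n+2), (if (t+1:ℕ) = i.1 + 1 ∨ i.1 = (t+1) + 1 then (1:ZMod 2) else 0)
          = (if i = ⟨t, by omega⟩ then 1 else 0) + (if i = ⟨t+2, by omega⟩ then 1 else 0) := by
        intro i
        by_cases hi1 : i.1 = t
        · rw [if_pos (by omega), if_pos (by apply Fin.ext; show i.1 = t; omega),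
            if_neg (by intro hc; rw [hc] at hi1; exact absurd hi1 (by show ¬ (t+2 = t); omega))]
          decide
        · by_cases hi2 : i.1 = t+2
          · rw [if_pos (by omega), if_neg (by intro hc; apply hi1; rw [hc]),
              if_pos (by apply Fin.ext; show i.1 = t+2; omega)]
            decide
          · rw [if_neg (by omega), if_neg (by intro hc; apply hi1; rw [hc]),
              if_neg (by intro hc; apply hi2; rw [hc])]
            decide
      rw [Finset.sum_congr rfl (fun i _ => by rw [h2 i])] at h1
      have h3 : ∀ i ∈ Finset.univ, g i * ((if i = (⟨t, by omega⟩ : Fin (n+2)) then (1:ZMod 2) else 0)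
          + (if i = ⟨t+2, by omega⟩ then 1 else 0))
          = g i * (if i = (⟨t, by omega⟩ : Fin (n+2)) then (1:ZMod 2) else 0)
            + g i * (if i = ⟨t+2, by omega⟩ then 1 else 0) := by
        intro i _
        ring
      rw [Finset.sum_congr rfl h3, Finset.sum_add_distrib, hsingle, hsingle] at h1
      have e3 : gg (t+2) = g ⟨t+2, by omega⟩ := dif_pos _
      have e4 : gg t = g ⟨t, by omega⟩ := dif_pos _
      rw [e3, e4]
      have := zeq _ _ h1
      exact this.symm
    have hmain : ∀ t : ℕ, t < n + 2 → gg t = gg (t % 2) := by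
      intro t
      induction t using Nat.strong_induction_on with
      | _ t ih =>
        intro ht
        rcases (by omega : t = 0 ∨ t = 1 ∨ 2 ≤ t) with h | h | h
        · rw [h]
        · rw [h]
        · obtain ⟨s, hs⟩ : ∃ s, t = s + 2 := ⟨t - 2, by omega⟩
          rw [hs, hstep s (by omega), ih s (by omega) (by omega),
            (by omega : (s+2) % 2 = s % 2)]
    have hg0 : gg 0 = 0 := by
      have := hmain n (by omega)
      rw [(by omega : n % 2 = 0)] at this
      rw [← this]
      exact hgn
    intro i
    have h1 : gg i.1 = g i := by
      show (if h : i.1 < n+2 then g ⟨i.1, h⟩ else 0) = g i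
      rw [dif_pos i.2]
    have h2 := hmain i.1 i.2
    rcases (by omega : i.1 % 2 = 0 ∨ i.1 % 2 = 1) with h | h
    · rw [← h1, h2, h, hg0]
    · rw [← h1, h2, h, hg1]
  have hcard := hindep.fintype_card_le_finrank
  rw [Fintype.card_fin, Module.finrank_pi, Fintype.card_fin] at hcard
  omega



end PhiAux

/-- φ(O_n^{-}(2)) = n + 2 when n ≡ 2 (mod 8): S_{n+2} embeds with transpositions going to orthogonal transvections t_v with Q(v) = 1, while S_{n+3} does not. -/
theorem phi_O_minus_2_mod8_two (n : ℕ) (hn : 10 ≤ n) (hmod : n % 8 = 2) :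
    (∃ ψ : Equiv.Perm (Fin (n + 2)) →* ((Fin n → ZMod 2) ≃ₗ[ZMod 2] (Fin n → ZMod 2)),
      Function.Injective ψ ∧
      ∀ τ : Equiv.Perm (Fin (n + 2)), τ.IsSwap →
        ∃ v : Fin n → ZMod 2, Qform n (by omega) v = 1 ∧
          ∀ w, (ψ τ) w = w + polarForm (Qform n (by omega)) w v • v) ∧
    ¬ (∃ ψ : Equiv.Perm (Fin (n + 3)) →* ((Fin n → ZMod 2) ≃ₗ[ZMod 2] (Fin n → ZMod 2)),
      Function.Injective ψ ∧
      ∀ τ : Equiv.Perm (Fin (n + 3)), τ.IsSwap →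
        ∃ v : Fin n → ZMod 2, Qform n (by omega) v = 1 ∧
          ∀ w, (ψ τ) w = w + polarForm (Qform n (by omega)) w v • v) := by
  constructor
  · refine ⟨PhiAux.psi n hn hmod, PhiAux.psi_injective n hn hmod, ?_⟩
    intro τ hsw
    obtain ⟨a, b, hab, rfl⟩ := hsw
    refine ⟨PhiAux.uu n a.1 + PhiAux.uu n b.1, ?_, ?_⟩
    · exact PhiAux.Q_uu_add n (by omega) hmod a.1 b.1 a.2 b.2 (fun h => hab (Fin.ext h))
    · intro w
      rw [PhiAux.polar_eq n (by omega) (by omega) w (PhiAux.uu n a.1 + PhiAux.uu n b.1)]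
      exact PhiAux.psi_swap n hn hmod a b hab w
  · exact PhiAux.neg_part n hn hmod (by omega)
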